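/- arXiv:1406.6144 — 4 statements merged into one kernel-verified Lean document; each statement's English description precedes it below -/
import Mathlib

section
/- For any regular expression E over an alphabet Σ and any word w ∈ Σ*, the word w belongs to L(E) if and only if there exists an expression E' in the set of Antimirov partial derivatives of E with respect to w such that ε ∈ L(E'). -/
open RegularExpression Computability

/-- Antimirov partial derivative of a regular expression w.r.t. a symbol. -/
def pderiv {α : Type*} [DecidableEq α] (a : α) :
    RegularExpression α → Set (RegularExpression α)
  | RegularExpression.zero => ∅
  | RegularExpression.epsilon => ∅
  | RegularExpression.char b => if b = a then {RegularExpression.epsilon} else ∅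
  | RegularExpression.plus E₁ E₂ => pderiv a E₁ ∪ pderiv a E₂
  | RegularExpression.comp E₁ E₂ =>
      ((fun E => RegularExpression.comp E E₂) '' pderiv a E₁) ∪
        {E | E ∈ pderiv a E₂ ∧ ([] : List α) ∈ E₁.matches'}
  | RegularExpression.star E₁ =>
      (fun E => RegularExpression.comp E (RegularExpression.star E₁)) '' pderiv a E₁

lemma mem_cons_kstar {α : Type*} {l : Language α} {a : α} {w : List α} :
    a :: w ∈ l∗ ↔ ∃ u v, w = u ++ v ∧ a :: u ∈ l ∧ v ∈ l∗ := by
  constructor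
  · intro h
    rw [Language.mem_kstar_iff_exists_nonempty] at h
    obtain ⟨L, hflat, hmem⟩ := h
    induction L with
    | nil => simp at hflat
    | cons x L ih =>
      rcases x with _ | ⟨b, x⟩
      · exact absurd rfl (hmem [] (by simp)).2
      · simp only [List.flatten_cons, List.cons_append, List.cons.injEq] at hflat
        obtain ⟨rfl, rfl⟩ := hflat
        refine ⟨x, L.flatten, rfl, (hmem _ (by simp)).1, ?_⟩
        exact Language.join_mem_kstar fun y hy => (hmem y (by simp [hy])).1
  · rintro ⟨u, v, rfl, hu, hv⟩
    have : a :: u ++ v ∈ l * l∗ := ⟨_, hu, _, hv, rfl⟩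
    exact (mul_kstar_le_kstar : l * l∗ ≤ l∗) this

lemma pderiv_spec {α : Type*} [DecidableEq α] (a : α) (E : RegularExpression α)
    (w : List α) : a :: w ∈ E.matches' ↔ ∃ E' ∈ pderiv a E, w ∈ E'.matches' := by
  induction E generalizing w with
  | zero => simp [pderiv, matches'_zero]
  | epsilon => simp [pderiv, matches'_epsilon, Language.mem_one]
  | char b =>
    simp only [matches'_char, Set.mem_singleton_iff, List.cons.injEq, pderiv]
    constructor
    · rintro ⟨rfl, rfl⟩
      refine ⟨RegularExpression.epsilon, by simp, ?_⟩
      exact (Language.mem_one _).mpr rfl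
    · rintro ⟨E', hE', hw⟩
      split at hE'
      · next h =>
          subst h
          simp only [Set.mem_singleton_iff] at hE'
          subst hE'
          obtain rfl := (Language.mem_one _).mp hw
          exact rfl
      · exact absurd hE' (Set.notMem_empty _)
  | plus P Q ihP ihQ =>
    rw [show P.plus Q = P + Q from rfl, matches'_add, Language.mem_add]
    simp only [pderiv, Set.mem_union, ihP, ihQ]
    constructor
    · rintro (⟨E', h, hw⟩ | ⟨E', h, hw⟩) <;> exact ⟨E', by tauto, hw⟩
    · rintro ⟨E', (h | h), hw⟩
      · exact Or.inl ⟨E', h, hw⟩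
      · exact Or.inr ⟨E', h, hw⟩
  | comp P Q ihP ihQ =>
    rw [show (P.comp Q) = P * Q from rfl, matches'_mul]
    constructor
    · intro h
      obtain ⟨u, hu, v, hv, huv⟩ := h
      rcases u with _ | ⟨b, u⟩
      · simp only [List.nil_append] at huv; subst huv
        obtain ⟨E', hE', hw⟩ := (ihQ w).mp hv
        exact ⟨E', Or.inr ⟨hE', hu⟩, hw⟩
      · simp only [List.cons_append, List.cons.injEq] at huv
        obtain ⟨rfl, rfl⟩ := huv
        obtain ⟨E', hE', hu'⟩ := (ihP u).mp hu
        refine ⟨E'.comp Q, Or.inl ⟨E', hE', rfl⟩, ?_⟩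
        rw [show (E'.comp Q) = E' * Q from rfl, matches'_mul]
        exact ⟨u, hu', v, hv, rfl⟩
    · rintro ⟨E', (⟨F, hF, rfl⟩ | ⟨hE', hnil⟩), hw⟩
      · simp only at hw
        rw [show (F.comp Q) = F * Q from rfl, matches'_mul] at hw
        obtain ⟨u, hu, v, hv, rfl⟩ := hw
        exact ⟨a :: u, (ihP u).mpr ⟨F, hF, hu⟩, v, hv, rfl⟩
      · exact ⟨[], hnil, a :: w, (ihQ w).mpr ⟨E', hE', hw⟩, rfl⟩
  | star P ihP =>
    rw [matches'_star, mem_cons_kstar]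
    constructor
    · rintro ⟨u, v, rfl, hu, hv⟩
      obtain ⟨E', hE', hu'⟩ := (ihP u).mp hu
      refine ⟨E'.comp P.star, ⟨E', hE', rfl⟩, ?_⟩
      rw [show (E'.comp P.star) = E' * P.star from rfl, matches'_mul]
      exact ⟨u, hu', v, by rwa [matches'_star], rfl⟩
    · rintro ⟨E', ⟨F, hF, rfl⟩, hw⟩
      simp only at hw
      rw [show (F.comp P.star) = F * P.star from rfl, matches'_mul] at hw
      obtain ⟨u, hu, v, hv, rfl⟩ := hw
      rw [matches'_star] at hv
      exact ⟨u, v, rfl, (ihP u).mpr ⟨F, hF, hu⟩, hv⟩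


/-- Antimirov partial derivative w.r.t. a word. -/
def pderivWord {α : Type*} [DecidableEq α] :
    RegularExpression α → List α → Set (RegularExpression α)
  | E, [] => {E}
  | E, a :: w => ⋃ E' ∈ pderiv a E, pderivWord E' w

/-- A word belongs to the language of `E` iff some partial derivative of `E`
w.r.t. the word accepts the empty word. -/
theorem antimirov_membership {α : Type*} [DecidableEq α]
    (E : RegularExpression α) (w : List α) :
    w ∈ E.matches' ↔ ∃ E' ∈ pderivWord E w, ([] : List α) ∈ E'.matches' := by
  induction w generalizing E with
  | nil =>
    simp only [pderivWord, Set.mem_singleton_iff]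
    constructor
    · intro h; exact ⟨E, rfl, h⟩
    · rintro ⟨E', rfl, h⟩; exact h
  | cons a w ih =>
    rw [pderiv_spec]
    simp only [pderivWord, Set.mem_iUnion, exists_prop]
    constructor
    · rintro ⟨E', hE', hw⟩
      obtain ⟨F, hF, h⟩ := (ih E').mp hw
      exact ⟨F, ⟨E', hE', hF⟩, h⟩
    · rintro ⟨F, ⟨E', hE', hF⟩, h⟩
      exact ⟨E', hE', (ih E').mpr ⟨F, hF, h⟩⟩
end

section
/- Under the same hypotheses (X a functional non-crossing substitution set, r compatible with X, r' the realization X-associated with r), for every constrained expression E one has L_{I,r}(E) = L_{I,r'}(E_X). -/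
open Computability

/-- Words over the symbol alphabet `A` and the variable alphabet `V`. -/
abbrev Word (A V : Type) := List (A ⊕ V)

/-- Terms over an expression environment: variables, the empty word, letters,
catenation (the built-in binary function symbol `·`) and extra function symbols `F`. -/
inductive Tm (A V : Type) (F : ℕ → Type) : Type
  | var : V → Tm A V F
  | eps : Tm A V F
  | ltr : A → Tm A V F
  | cat : Tm A V F → Tm A V F → Tm A V F
  | app : {k : ℕ} → F k → (Fin k → Tm A V F) → Tm A V F

/-- Quantifier-free boolean formulae: predicate symbols from `P` applied to terms,
combined by arbitrary `k`-ary boolean operators. -/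
inductive Fm (A V : Type) (P F : ℕ → Type) : Type
  | atom : {k : ℕ} → P k → (Fin k → Tm A V F) → Fm A V P F
  | op : {k : ℕ} → ((Fin k → Bool) → Bool) → (Fin k → Fm A V P F) → Fm A V P F

/-- An expression interpretation: domain `Σ*` (i.e. `List A`), letters, `ε` and
catenation interpreted standardly; the remaining function and predicate symbols
are interpreted by arbitrary (total, functional) maps. -/
structure Interp (A V : Type) (P F : ℕ → Type) where
  fn : {k : ℕ} → F k → (Fin k → List A) → List A
  pr : {k : ℕ} → P k → (Fin k → List A) → Bool

/-- Evaluation of a term under an interpretation and a realization `r : V → Σ*`. -/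
def Tm.eval {A V : Type} {P F : ℕ → Type} (I : Interp A V P F) (r : V → List A) :
    Tm A V F → List A
  | .var x => r x
  | .eps => []
  | .ltr a => [a]
  | .cat t u => Tm.eval I r t ++ Tm.eval I r u
  | .app f ts => I.fn f fun i => Tm.eval I r (ts i)

/-- Evaluation of a boolean formula under an interpretation and a realization. -/
def Fm.eval {A V : Type} {P F : ℕ → Type} (I : Interp A V P F) (r : V → List A) :
    Fm A V P F → Bool
  | .atom p ts => I.pr p fun i => Tm.eval I r (ts i)
  | .op o fs => o fun i => Fm.eval I r (fs i)

/-- Extension of a realization to a monoid morphism `(Σ ∪ Γ)* → Σ*`. -/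
def rWord {A V : Type} (r : V → List A) (α : Word A V) : List A :=
  α.flatMap (Sum.elim (fun a => [a]) r)

/-- Constrained expressions over an expression environment `(A, V, P, F)`,
with sum as the only boolean operator over expressions. -/
inductive CExp (A V : Type) (P F : ℕ → Type) : Type
  | zero : CExp A V P F
  | word : Word A V → CExp A V P F
  | plus : CExp A V P F → CExp A V P F → CExp A V P F
  | comp : CExp A V P F → CExp A V P F → CExp A V P F
  | star : CExp A V P F → CExp A V P F
  | constr : CExp A V P F → Fm A V P F → CExp A V P F
  | mtch : Word A V → CExp A V P F → CExp A V P F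

/-- The `(I,r)`-language of a constrained expression. -/
def CExp.lang {A V : Type} {P F : ℕ → Type} (I : Interp A V P F) (r : V → List A) :
    CExp A V P F → Language A
  | .zero => 0
  | .word α => {rWord r α}
  | .plus E₁ E₂ => CExp.lang I r E₁ + CExp.lang I r E₂
  | .comp E₁ E₂ => CExp.lang I r E₁ * CExp.lang I r E₂
  | .star E₁ => (CExp.lang I r E₁)∗
  | .constr E₁ φ => if Fm.eval I r φ then CExp.lang I r E₁ else 0
  | .mtch α E₁ => {w | w = rWord r α ∧ w ∈ CExp.lang I r E₁}

/-- The `I`-language of a constrained expression: union over all realizations. -/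
def langI {A V : Type} {P F : ℕ → Type} (I : Interp A V P F) (E : CExp A V P F) :
    Language A :=
  {w | ∃ r : V → List A, w ∈ CExp.lang I r E}

/-- Substitution of the word `w` for every occurrence of the variable `x` in a word. -/
def substW {A V : Type} [DecidableEq V] (x : V) (w : Word A V) : Word A V → Word A V
  | [] => []
  | Sum.inl a :: α => Sum.inl a :: substW x w α
  | Sum.inr y :: α => (if y = x then w else [Sum.inr y]) ++ substW x w α

/-- Simultaneous substitution of words for variables in a word. -/
def substAllW {A V : Type} (σ : V → Word A V) (α : Word A V) : Word A V :=
  α.flatMap (Sum.elim (fun a => [Sum.inl a]) σ)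

/-- The term associated with a single symbol. -/
def symTm {A V : Type} {F : ℕ → Type} : (A ⊕ V) → Tm A V F
  | Sum.inl a => .ltr a
  | Sum.inr x => .var x

/-- The term `Term(w)` associated with a word. -/
def wordTm {A V : Type} {F : ℕ → Type} : Word A V → Tm A V F
  | [] => .eps
  | [c] => symTm c
  | c :: α => .cat (symTm c) (wordTm α)

/-- Simultaneous substitution in a term. -/
def Tm.substAll {A V : Type} {F : ℕ → Type} (σ : V → Word A V) : Tm A V F → Tm A V F
  | .var x => wordTm (σ x)
  | .eps => .eps
  | .ltr a => .ltr a
  | .cat t u => .cat (Tm.substAll σ t) (Tm.substAll σ u)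
  | .app f ts => .app f fun i => Tm.substAll σ (ts i)

/-- Simultaneous substitution in a boolean formula. -/
def Fm.substAll {A V : Type} {P F : ℕ → Type} (σ : V → Word A V) :
    Fm A V P F → Fm A V P F
  | .atom p ts => .atom p fun i => Tm.substAll σ (ts i)
  | .op o fs => .op o fun i => Fm.substAll σ (fs i)

/-- Substitution sets: sets of pairs (variable, word). -/
abbrev SubSet (A V : Type) := Set (V × Word A V)

/-- The substitution function associated with a (functional) substitution set. -/
noncomputable def SubSet.toSubst {A V : Type} (X : SubSet A V) (x : V) : Word A V :=
  open Classical in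
  if h : ∃ w, (x, w) ∈ X then h.choose else [Sum.inr x]

/-- Application of a substitution set to a word. -/
noncomputable def applyW {A V : Type} (X : SubSet A V) (α : Word A V) : Word A V :=
  substAllW X.toSubst α

/-- Application of a substitution set to a boolean formula. -/
noncomputable def applyF {A V : Type} {P F : ℕ → Type} (X : SubSet A V)
    (φ : Fm A V P F) : Fm A V P F :=
  Fm.substAll X.toSubst φ

/-- A substitution set is functional if no variable is bound to two distinct words. -/
def SubSet.Functional {A V : Type} (X : SubSet A V) : Prop :=
  ∀ x w w', (x, w) ∈ X → (x, w') ∈ X → w = w'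

/-- A substitution set is non-crossing if for distinct pairs `(x,w)` and `(x',w')`
in it, `x` does not occur in `w'`. -/
def SubSet.NonCrossing {A V : Type} (X : SubSet A V) : Prop :=
  ∀ x w x' w', (x, w) ∈ X → (x', w') ∈ X → (x, w) ≠ (x', w') → Sum.inr x ∉ w'

/-- A substitution set all of whose pairs have the form `(x, ax)` or `(x, ε)`. -/
def SubSet.Basic {A V : Type} (X : SubSet A V) : Prop :=
  ∀ x w, (x, w) ∈ X → w = [] ∨ ∃ a : A, w = [Sum.inl a, Sum.inr x]

/-- Simultaneous substitution in a constrained expression. -/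
def CExp.substAll {A V : Type} {P F : ℕ → Type} (σ : V → Word A V) :
    CExp A V P F → CExp A V P F
  | .zero => .zero
  | .word α => .word (substAllW σ α)
  | .plus E₁ E₂ => .plus (CExp.substAll σ E₁) (CExp.substAll σ E₂)
  | .comp E₁ E₂ => .comp (CExp.substAll σ E₁) (CExp.substAll σ E₂)
  | .star E₁ => .star (CExp.substAll σ E₁)
  | .constr E₁ φ => .constr (CExp.substAll σ E₁) (Fm.substAll σ φ)
  | .mtch α E₁ => .mtch (substAllW σ α) (CExp.substAll σ E₁)

/-- Application of a substitution set to a constrained expression. -/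
noncomputable def applyE {A V : Type} {P F : ℕ → Type} (X : SubSet A V)
    (E : CExp A V P F) : CExp A V P F :=
  CExp.substAll X.toSubst E


/-- A realization is compatible with a substitution set `X` if `r x` starts with `a`
whenever `(x, ax) ∈ X`, and `r x = ε` whenever `(x, ε) ∈ X`. -/
def Compatible {A V : Type} (r : V → List A) (X : SubSet A V) : Prop :=
  (∀ x a, (x, [Sum.inl a, Sum.inr x]) ∈ X → ∃ u, r x = a :: u) ∧
  (∀ x, (x, ([] : Word A V)) ∈ X → r x = [])

/-- The realization `X`-associated with `r`: it drops the leading symbol of `r x`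
when `(x, ax) ∈ X` and `r x = a·w`, and agrees with `r` otherwise. -/
noncomputable def assocReal {A V : Type} (r : V → List A) (X : SubSet A V) (x : V) :
    List A :=
  open Classical in
  if ∃ a u, (x, [Sum.inl a, Sum.inr x]) ∈ X ∧ r x = a :: u then (r x).tail else r x

section Aux
variable {A V : Type} {P F : ℕ → Type}

lemma rWord_nil (r : V → List A) : rWord r [] = [] := rfl

lemma rWord_append (r : V → List A) (α β : Word A V) :
    rWord r (α ++ β) = rWord r α ++ rWord r β := by
  simp [rWord]

lemma rWord_cons (r : V → List A) (c : A ⊕ V) (α : Word A V) :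
    rWord r (c :: α) = Sum.elim (fun a => [a]) r c ++ rWord r α := rfl

lemma key_subst {X : SubSet A V} (hB : X.Basic) (hF : X.Functional)
    (r : V → List A) (hr : Compatible r X) (x : V) :
    rWord (assocReal r X) (X.toSubst x) = r x := by
  classical
  unfold SubSet.toSubst
  by_cases h : ∃ w, (x, w) ∈ X
  · simp only [h, dif_pos]
    have hw := h.choose_spec
    rcases hB x _ hw with h0 | ⟨a, ha⟩
    · rw [h0, rWord_nil, hr.2 x (h0 ▸ hw)]
    · rw [ha]
      obtain ⟨u, hu⟩ := hr.1 x a (ha ▸ hw)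
      have hcond : ∃ a u, (x, [Sum.inl a, Sum.inr x]) ∈ X ∧ r x = a :: u :=
        ⟨a, u, ha ▸ hw, hu⟩
      have h' : assocReal r X x = (r x).tail := by
        unfold assocReal; rw [if_pos hcond]
      simp [rWord, h', hu]
  · simp only [h, dif_neg, not_false_iff]
    have hcond : ¬ ∃ a u, (x, [Sum.inl a, Sum.inr x]) ∈ X ∧ r x = a :: u := by
      rintro ⟨a, u, haX, -⟩; exact h ⟨_, haX⟩
    have h' : assocReal r X x = r x := by
      unfold assocReal; rw [if_neg hcond]
    simp [rWord, h']

lemma rWord_substAllW {r r' : V → List A} {σ : V → Word A V}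
    (hσ : ∀ x, rWord r' (σ x) = r x) (α : Word A V) :
    rWord r' (substAllW σ α) = rWord r α := by
  induction α with
  | nil => rfl
  | cons c α ih =>
    rw [rWord_cons]
    show rWord r' (Sum.elim (fun a => [Sum.inl a]) σ c ++ substAllW σ α) = _
    rw [rWord_append, ih]
    cases c with
    | inl a => rfl
    | inr x => simp [hσ x]

lemma eval_wordTm (I : Interp A V P F) (r : V → List A) :
    ∀ w : Word A V, Tm.eval I r (wordTm w) = rWord r w := by
  intro w
  induction w with
  | nil => rfl
  | cons c α ih =>
    cases α with
    | nil =>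
      cases c with
      | inl a => simp [wordTm, symTm, Tm.eval, rWord]
      | inr x => simp [wordTm, symTm, Tm.eval, rWord]
    | cons d β =>
      rw [show wordTm (c :: d :: β) = Tm.cat (symTm c) (wordTm (d :: β)) from rfl]
      rw [Tm.eval, ih, rWord_cons]
      cases c with
      | inl a => rfl
      | inr x => simp [symTm, Tm.eval, rWord]

lemma eval_substAll (I : Interp A V P F) {r r' : V → List A} {σ : V → Word A V}
    (hσ : ∀ x, rWord r' (σ x) = r x) (t : Tm A V F) :
    Tm.eval I r' (Tm.substAll σ t) = Tm.eval I r t := by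
  induction t with
  | var x => simp [Tm.substAll, eval_wordTm, hσ x, Tm.eval]
  | eps => rfl
  | ltr a => rfl
  | cat t u iht ihu => simp [Tm.substAll, Tm.eval, iht, ihu]
  | app f ts ih => simp [Tm.substAll, Tm.eval]; congr 1; funext i; exact ih i

lemma feval_substAll (I : Interp A V P F) {r r' : V → List A} {σ : V → Word A V}
    (hσ : ∀ x, rWord r' (σ x) = r x) (φ : Fm A V P F) :
    Fm.eval I r' (Fm.substAll σ φ) = Fm.eval I r φ := by
  induction φ with
  | atom p ts =>
    simp only [Fm.substAll, Fm.eval]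
    congr 1; funext i; exact eval_substAll I hσ (ts i)
  | op o fs ih =>
    simp only [Fm.substAll, Fm.eval]
    congr 1; funext i; exact ih i

lemma lang_substAll (I : Interp A V P F) {r r' : V → List A} {σ : V → Word A V}
    (hσ : ∀ x, rWord r' (σ x) = r x) (E : CExp A V P F) :
    CExp.lang I r E = CExp.lang I r' (CExp.substAll σ E) := by
  induction E with
  | zero => rfl
  | word α => simp [CExp.substAll, CExp.lang, rWord_substAllW hσ]
  | plus E₁ E₂ ih₁ ih₂ => simp [CExp.substAll, CExp.lang, ih₁, ih₂]
  | comp E₁ E₂ ih₁ ih₂ => simp [CExp.substAll, CExp.lang, ih₁, ih₂]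
  | star E₁ ih => simp [CExp.substAll, CExp.lang, ih]
  | constr E₁ φ ih => simp [CExp.substAll, CExp.lang, ih, feval_substAll I hσ φ]
  | mtch α E₁ ih => simp [CExp.substAll, CExp.lang, ih, rWord_substAllW hσ]; rfl

end Aux

/-- Languages are invariant under transferring the assumptions of a functional
non-crossing substitution set from the realization to the expression:
`L_{I,r}(E) = L_{I,r'}(E_X)` where `r'` is the realization `X`-associated with `r`. -/
theorem lang_assoc_subst {A V : Type} {P F : ℕ → Type}
    (X : SubSet A V) (hB : X.Basic) (hF : X.Functional) (hN : X.NonCrossing)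
    (I : Interp A V P F) (r : V → List A) (hr : Compatible r X)
    (E : CExp A V P F) :
    CExp.lang I r E = CExp.lang I (assocReal r X) (applyE X E) := by
  exact lang_substAll I (key_subst hB hF r hr) E
end

section
/- For every constrained expression E (with + as the only boolean operator over expressions), interpretation I and realization r: Null_{I,r}(E) = 1 if and only if there exists a pair (X, φ) in the indicator set S^ε(E) such that (i) r(x) = ε for every x ∈ X, and (ii) eval_{I,r}(φ) = 1. -/
open Computability

/-- The set of variable symbols occurring in a word. -/
def varsW {A V : Type} (α : Word A V) : Set V := {x | Sum.inr x ∈ α}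

/-- A word made only of variable symbols (i.e. a word of `Γ*`). -/
def onlyVars {A V : Type} (α : Word A V) : Prop := ∀ c ∈ α, ∃ x : V, c = Sum.inr x

/-- The formula `⊤`. -/
def fmTrue {A V : Type} {P F : ℕ → Type} : Fm A V P F :=
  Fm.op (fun _ : Fin 0 → Bool => true) (fun i => i.elim0)

/-- Conjunction of two formulae. -/
def fmAnd {A V : Type} {P F : ℕ → Type} (φ ψ : Fm A V P F) : Fm A V P F :=
  Fm.op (fun v : Fin 2 → Bool => v 0 && v 1) ![φ, ψ]

/-- Substitution of `ε` for every variable of `X` in a term. -/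
noncomputable def Tm.substEps {A V : Type} {F : ℕ → Type} (X : Set V) :
    Tm A V F → Tm A V F
  | .var x => open Classical in if x ∈ X then .eps else .var x
  | .eps => .eps
  | .ltr a => .ltr a
  | .cat t u => .cat (Tm.substEps X t) (Tm.substEps X u)
  | .app f ts => .app f fun i => Tm.substEps X (ts i)

/-- Substitution of `ε` for every variable of `X` in a formula (`φ_{X←ε}`). -/
noncomputable def Fm.substEps {A V : Type} {P F : ℕ → Type} (X : Set V) :
    Fm A V P F → Fm A V P F
  | .atom p ts => .atom p fun i => Tm.substEps X (ts i)
  | .op o fs => .op o fun i => Fm.substEps X (fs i)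

/-- The product `⊗` on indicator sets. -/
noncomputable def tensor {A V : Type} {P F : ℕ → Type}
    (S₁ S₂ : Set (Set V × Fm A V P F)) : Set (Set V × Fm A V P F) :=
  {p | ∃ q₁ ∈ S₁, ∃ q₂ ∈ S₂,
      p = (q₁.1 ∪ q₂.1, Fm.substEps (q₁.1 ∪ q₂.1) (fmAnd q₁.2 q₂.2))}

/-- The indicator set `S^ε(E)`: pairs of a set of variables that must be erased and
a formula that must be satisfied for `ε` to belong to the language of `E`. -/
noncomputable def Seps {A V : Type} {P F : ℕ → Type} :
    CExp A V P F → Set (Set V × Fm A V P F)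
  | .zero => ∅
  | .word α => {p | onlyVars α ∧ p = (varsW α, fmTrue)}
  | .mtch α E₁ => {p | onlyVars α ∧ p ∈ tensor {(varsW α, fmTrue)} (Seps E₁)}
  | .plus E₁ E₂ => Seps E₁ ∪ Seps E₂
  | .comp E₁ E₂ => tensor (Seps E₁) (Seps E₂)
  | .star _ => {((∅ : Set V), fmTrue)}
  | .constr E₁ φ => {p | ∃ q ∈ Seps E₁, p = (q.1, Fm.substEps q.1 (fmAnd φ q.2))}

lemma Tm.eval_substEps {A V : Type} {P F : ℕ → Type} (I : Interp A V P F)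
    (r : V → List A) (X : Set V) (h : ∀ x ∈ X, r x = []) (t : Tm A V F) :
    Tm.eval I r (Tm.substEps X t) = Tm.eval I r t := by
  induction t with
  | var x =>
    rw [Tm.substEps]
    split_ifs with hx
    · simp [Tm.eval, h x hx]
    · rfl
  | eps => rfl
  | ltr a => rfl
  | cat t u iht ihu => simp [Tm.substEps, Tm.eval, iht, ihu]
  | app f ts ih => simp only [Tm.substEps, Tm.eval]; exact congrArg _ (funext ih)

lemma Fm.eval_substEps {A V : Type} {P F : ℕ → Type} (I : Interp A V P F)
    (r : V → List A) (X : Set V) (h : ∀ x ∈ X, r x = []) (φ : Fm A V P F) :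
    Fm.eval I r (Fm.substEps X φ) = Fm.eval I r φ := by
  induction φ with
  | atom p ts =>
    simp only [Fm.substEps, Fm.eval]
    exact congrArg _ (funext fun i => Tm.eval_substEps I r X h (ts i))
  | op o fs ih => simp only [Fm.substEps, Fm.eval]; exact congrArg _ (funext ih)

lemma eval_fmTrue {A V : Type} {P F : ℕ → Type} (I : Interp A V P F)
    (r : V → List A) : Fm.eval I r (fmTrue : Fm A V P F) = true := rfl

lemma eval_fmAnd {A V : Type} {P F : ℕ → Type} (I : Interp A V P F)
    (r : V → List A) (φ ψ : Fm A V P F) :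
    Fm.eval I r (fmAnd φ ψ) = (Fm.eval I r φ && Fm.eval I r ψ) := by
  simp [fmAnd, Fm.eval]

lemma nil_rWord {A V : Type} (r : V → List A) (α : Word A V) :
    (([] : List A) = rWord r α) ↔ (onlyVars α ∧ ∀ x ∈ varsW α, r x = []) := by
  induction α with
  | nil => simp [rWord, onlyVars, varsW]
  | cons c α ih =>
    cases c with
    | inl a => simp [rWord, onlyVars]
    | inr x =>
      simp only [rWord, List.flatMap_cons, Sum.elim_inr] at *
      constructor
      · intro h
        rcases List.append_eq_nil_iff.mp h.symm with ⟨h1, h2⟩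
        rcases ih.mp h2.symm with ⟨ho, hv⟩
        refine ⟨fun d hd => ?_, fun y hy => ?_⟩
        · rcases List.mem_cons.mp hd with rfl | hd
          · exact ⟨x, rfl⟩
          · exact ho d hd
        · rcases List.mem_cons.mp hy with h | hy
          · obtain rfl : y = x := Sum.inr_injective h
            exact h1
          · exact hv y hy
      · rintro ⟨ho, hv⟩
        have h1 : r x = [] := hv x List.mem_cons_self
        have h2 : ([] : List A) = α.flatMap (Sum.elim (fun a => [a]) r) :=
          ih.mpr ⟨fun d hd => ho d (List.mem_cons_of_mem _ hd),
            fun y hy => hv y (List.mem_cons_of_mem _ hy)⟩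
        rw [h1, ← h2]
        rfl

def Good {A V : Type} {P F : ℕ → Type} (I : Interp A V P F) (r : V → List A)
    (p : Set V × Fm A V P F) : Prop :=
  (∀ x ∈ p.1, r x = []) ∧ Fm.eval I r p.2 = true

lemma tensor_good {A V : Type} {P F : ℕ → Type} (I : Interp A V P F) (r : V → List A)
    (S₁ S₂ : Set (Set V × Fm A V P F)) :
    (∃ p ∈ tensor S₁ S₂, Good I r p) ↔
      (∃ p ∈ S₁, Good I r p) ∧ (∃ p ∈ S₂, Good I r p) := by
  constructor
  · rintro ⟨p, ⟨q₁, hq₁, q₂, hq₂, rfl⟩, hvars, heval⟩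
    simp only at hvars heval
    have h1 : ∀ x ∈ q₁.1, r x = [] := fun x hx => hvars x (Or.inl hx)
    have h2 : ∀ x ∈ q₂.1, r x = [] := fun x hx => hvars x (Or.inr hx)
    rw [Fm.eval_substEps I r _ hvars, eval_fmAnd, Bool.and_eq_true] at heval
    exact ⟨⟨q₁, hq₁, h1, heval.1⟩, ⟨q₂, hq₂, h2, heval.2⟩⟩
  · rintro ⟨⟨q₁, hq₁, h1, e1⟩, ⟨q₂, hq₂, h2, e2⟩⟩
    refine ⟨_, ⟨q₁, hq₁, q₂, hq₂, rfl⟩, ?_, ?_⟩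
    · rintro x (hx | hx)
      · exact h1 x hx
      · exact h2 x hx
    · have hu : ∀ x ∈ q₁.1 ∪ q₂.1, r x = [] := by
        rintro x (hx | hx); exacts [h1 x hx, h2 x hx]
      rw [Fm.eval_substEps I r _ hu, eval_fmAnd, e1, e2]; rfl

/-- `Null_{I,r}(E) = 1` iff some pair `(X, φ) ∈ S^ε(E)` satisfies: `r` maps every
variable of `X` to `ε`, and `eval_{I,r}(φ) = 1`. -/
theorem null_iff_Seps {A V : Type} {P F : ℕ → Type}
    (I : Interp A V P F) (r : V → List A) (E : CExp A V P F) :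
    (([] : List A) ∈ CExp.lang I r E) ↔
      ∃ p ∈ Seps E, (∀ x ∈ p.1, r x = []) ∧ Fm.eval I r p.2 = true := by
    induction E with
  | zero => simp [CExp.lang, Seps]
  | word α =>
    simp only [CExp.lang, Seps, Set.mem_setOf_eq]
    have hmem : (([] : List A) ∈ ({rWord r α} : Language A)) ↔ ([] : List A) = rWord r α :=
      Iff.rfl
    rw [hmem, nil_rWord]
    constructor
    · rintro ⟨ho, hv⟩
      exact ⟨(varsW α, fmTrue), ⟨ho, rfl⟩, hv, rfl⟩
    · rintro ⟨p, ⟨ho, rfl⟩, hv, -⟩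
      exact ⟨ho, hv⟩
  | plus E₁ E₂ ih₁ ih₂ =>
    have hmem : (([] : List A) ∈ CExp.lang I r (CExp.plus E₁ E₂)) ↔
        (([] : List A) ∈ CExp.lang I r E₁ ∨ ([] : List A) ∈ CExp.lang I r E₂) := Iff.rfl
    simp only [Seps]
    rw [hmem, ih₁, ih₂]
    simp only [Set.mem_union]
    constructor
    · rintro (⟨p, hp, h⟩ | ⟨p, hp, h⟩)
      exacts [⟨p, Or.inl hp, h⟩, ⟨p, Or.inr hp, h⟩]
    · rintro ⟨p, hp | hp, h⟩
      exacts [Or.inl ⟨p, hp, h⟩, Or.inr ⟨p, hp, h⟩]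
  | comp E₁ E₂ ih₁ ih₂ =>
    have : (([] : List A) ∈ CExp.lang I r (CExp.comp E₁ E₂)) ↔
        (([] : List A) ∈ CExp.lang I r E₁) ∧ (([] : List A) ∈ CExp.lang I r E₂) := by
      simp only [CExp.lang, Language.mem_mul]
      constructor
      · rintro ⟨a, ha, b, hb, hab⟩
        rcases List.append_eq_nil_iff.mp hab with ⟨rfl, rfl⟩
        exact ⟨ha, hb⟩
      · rintro ⟨h1, h2⟩
        exact ⟨[], h1, [], h2, rfl⟩
    rw [this, ih₁, ih₂]
    exact (tensor_good I r (Seps E₁) (Seps E₂)).symm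
  | star E₁ ih =>
    simp only [CExp.lang, Seps]
    constructor
    · intro _
      exact ⟨(∅, fmTrue), rfl, by simp, rfl⟩
    · intro _
      exact Language.nil_mem_kstar _
  | constr E₁ φ ih =>
    simp only [CExp.lang, Seps]
    constructor
    · intro h
      split_ifs at h with hφ
      · rcases ih.mp h with ⟨q, hq, hv, he⟩
        refine ⟨_, ⟨q, hq, rfl⟩, hv, ?_⟩
        rw [Fm.eval_substEps I r _ hv, eval_fmAnd, hφ, he]; rfl
      · exact h.elim
    · rintro ⟨p, ⟨q, hq, rfl⟩, hv, he⟩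
      simp only at hv he
      rw [Fm.eval_substEps I r _ hv, eval_fmAnd, Bool.and_eq_true] at he
      rw [if_pos he.1]
      exact ih.mpr ⟨q, hq, hv, he.2⟩
  | mtch α E₁ ih =>
    simp only [Seps]
    have hmem : (([] : List A) ∈ CExp.lang I r (CExp.mtch α E₁)) ↔
        (([] : List A) = rWord r α ∧ ([] : List A) ∈ CExp.lang I r E₁) := Iff.rfl
    rw [hmem, nil_rWord, ih]
    simp only [Set.mem_setOf_eq]
    constructor
    · rintro ⟨⟨ho, hv⟩, hE⟩
      have := (tensor_good I r {(varsW α, fmTrue)} (Seps E₁)).mpr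
        ⟨⟨_, rfl, hv, rfl⟩, hE⟩
      rcases this with ⟨p, hp, h⟩
      exact ⟨p, ⟨ho, hp⟩, h⟩
    · rintro ⟨p, ⟨ho, hp⟩, h⟩
      have := (tensor_good I r {(varsW α, fmTrue)} (Seps E₁)).mp ⟨p, hp, h⟩
      rcases this with ⟨⟨q, hq, hv, -⟩, hE⟩
      rw [Set.mem_singleton_iff] at hq
      subst hq
      exact ⟨⟨ho, hv⟩, hE⟩
end

section
/- Let φ be a quantifier-free formula such that there exist an interpretation I and a realization r for which eval_{I,r} is injective on the set Term(φ) of terms appearing in φ. Then φ is satisfiable (by some interpretation and realization with domain Σ*) if and only if its propositionalisation T(φ) is satisfiable by a propositional valuation. -/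
open Computability

/-- The atoms `P(t₁,…,t_k)` of formulae: a predicate symbol together with its
argument terms. Each atom gives rise to a propositional variable. -/
def Atom (A V : Type) (P F : ℕ → Type) : Type := Σ k : ℕ, P k × (Fin k → Tm A V F)

/-- Propositional formulae over a set `σ` of propositional symbols. -/
inductive PForm (σ : Type) : Type
  | atom : σ → PForm σ
  | op : {k : ℕ} → ((Fin k → Bool) → Bool) → (Fin k → PForm σ) → PForm σ

/-- Evaluation of a propositional formula under a valuation. -/
def PForm.eval {σ : Type} (v : σ → Bool) : PForm σ → Bool
  | .atom s => v s
  | .op o fs => o fun i => PForm.eval v (fs i)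

/-- The propositionalisation `T(φ)`: each atomic formula `P(t₁,…,t_k)` is replaced
by the propositional symbol `P_{(t₁,…,t_k)}`. -/
def propz {A V : Type} {P F : ℕ → Type} : Fm A V P F → PForm (Atom A V P F)
  | .atom p ts => .atom ⟨_, p, ts⟩
  | .op o fs => .op o fun i => propz (fs i)

/-- The set of atoms occurring in a formula. -/
def Fm.atoms {A V : Type} {P F : ℕ → Type} : Fm A V P F → Set (Atom A V P F)
  | .atom p ts => {⟨_, p, ts⟩}
  | .op _ fs => ⋃ i, Fm.atoms (fs i)

/-- Evaluation of an atom under an interpretation and a realization. -/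
def Atom.eval {A V : Type} {P F : ℕ → Type} (I : Interp A V P F) (r : V → List A) :
    Atom A V P F → Bool
  | ⟨_, p, ts⟩ => I.pr p fun i => Tm.eval I r (ts i)

/-- The set of terms appearing (as arguments of predicates) in a formula. -/
def Fm.terms {A V : Type} {P F : ℕ → Type} : Fm A V P F → Set (Tm A V F)
  | .atom _ ts => Set.range ts
  | .op _ fs => ⋃ i, Fm.terms (fs i)


/-- Evaluation of terms only depends on the function-symbol interpretation. -/
lemma Tm.eval_congr_fn {A V : Type} {P F : ℕ → Type} (I I' : Interp A V P F)
    (r : V → List A) (hfn : ∀ {k : ℕ} (f : F k) (ws : Fin k → List A),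
      I'.fn f ws = I.fn f ws) :
    ∀ t : Tm A V F, Tm.eval I' r t = Tm.eval I r t := by
  intro t
  induction t with
  | var x => rfl
  | eps => rfl
  | ltr a => rfl
  | cat t u iht ihu => simp [Tm.eval, iht, ihu]
  | app f ts ih => simp only [Tm.eval, hfn]; congr 1; funext i; exact ih i

lemma eval_eq_propz_eval {A V : Type} {P F : ℕ → Type} (I : Interp A V P F)
    (r : V → List A) (ψ : Fm A V P F) :
    Fm.eval I r ψ = PForm.eval (Atom.eval I r) (propz ψ) := by
  induction ψ with
  | atom p ts => rfl
  | op o fs ih => simp only [Fm.eval, propz, PForm.eval, ih]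

/-- If some evaluation `eval_{I,r}` is injective on the terms of `φ`, then `φ` is
satisfiable (by some interpretation with domain `Σ*` and realization) iff its
propositionalisation `T(φ)` is satisfiable by a propositional valuation. -/
theorem sat_iff_propz_sat {A V : Type} {P F : ℕ → Type} (φ : Fm A V P F)
    (hinj : ∃ (I : Interp A V P F) (r : V → List A),
        Set.InjOn (Tm.eval I r) (Fm.terms φ)) :
    (∃ (I : Interp A V P F) (r : V → List A), Fm.eval I r φ = true) ↔
    (∃ v : Atom A V P F → Bool, PForm.eval v (propz φ) = true) := by
  classical
  obtain ⟨I, r, hinj⟩ := hinj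
  constructor
  · rintro ⟨J, s, h⟩
    exact ⟨Atom.eval J s, by rw [← eval_eq_propz_eval]; exact h⟩
  · rintro ⟨v, hv⟩
    set J : Interp A V P F :=
      { fn := I.fn
        pr := fun {k} p ws =>
          if h : ∃ ts : Fin k → Tm A V F,
              (∀ i, ts i ∈ Fm.terms φ) ∧ (∀ i, Tm.eval I r (ts i) = ws i)
          then v ⟨k, p, h.choose⟩ else false } with hJ
    have hfn : ∀ {k : ℕ} (f : F k) (ws : Fin k → List A), J.fn f ws = I.fn f ws := by
      intro k f ws; rfl
    have hTm : ∀ t : Tm A V F, Tm.eval J r t = Tm.eval I r t :=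
      Tm.eval_congr_fn I J r hfn
    have key : ∀ ψ : Fm A V P F, Fm.terms ψ ⊆ Fm.terms φ →
        Fm.eval J r ψ = PForm.eval v (propz ψ) := by
      intro ψ
      induction ψ with
      | atom p ts =>
        intro hsub
        have hts : ∀ i, ts i ∈ Fm.terms φ := fun i => hsub ⟨i, rfl⟩
        show J.pr p (fun i => Tm.eval J r (ts i)) = v ⟨_, p, ts⟩
        have hex : ∃ ts' : Fin _ → Tm A V F,
            (∀ i, ts' i ∈ Fm.terms φ) ∧
            (∀ i, Tm.eval I r (ts' i) = Tm.eval J r (ts i)) :=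
          ⟨ts, hts, fun i => (hTm (ts i)).symm⟩
        have : J.pr p (fun i => Tm.eval J r (ts i)) = v ⟨_, p, hex.choose⟩ := by
          exact dif_pos hex
        rw [this]
        have hc := hex.choose_spec
        have : hex.choose = ts := by
          funext i
          exact hinj (hc.1 i) (hts i) (by rw [hc.2 i, hTm])
        rw [this]
      | op o fs ih =>
        intro hsub
        simp only [Fm.eval, propz, PForm.eval]
        congr 1
        funext i
        exact ih i (fun t ht => hsub (Set.mem_iUnion.2 ⟨i, ht⟩))
    exact ⟨J, r, by rw [key φ le_rfl]; exact hv⟩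
end
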